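/- Let E be a Euclidean space of dimension n ≥ 3 and W a smooth function on S^{n-1}. If W is invariant under the isotropy subgroup G_v ⊂ SO(n) of every vector v ∈ E \ {0} up to spherical harmonics of degree ≤ m-1 (i.e., for every v and every γ ∈ G_v, γ*W - W is a sum of spherical harmonics of degree ≤ m-1) and moreover for each v one can write W = q_v + S_v with q_v of degree ≤ m-1 and γ*S_v = S_v for all γ ∈ G_v, then W is a sum of spherical harmonics of degree ≤ m-1. -/

import Mathlib

open scoped RealInnerProductSpace

noncomputable section

abbrev E (n : ℕ) := EuclideanSpace ℝ (Fin n)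

def evalP {n : ℕ} (P : MvPolynomial (Fin n) ℝ) (v : E n) : ℝ :=
  MvPolynomial.eval (fun i => v i) P

def sphereS (n : ℕ) : Set (E n) := Metric.sphere 0 1

def IsDegLE {n : ℕ} (m : ℕ) (S : Set (E n)) (f : E n → ℝ) : Prop :=
  ∃ P : MvPolynomial (Fin n) ℝ, P.totalDegree ≤ m ∧ ∀ v ∈ S, f v = evalP P v

/-- `γ` belongs to `SO(n)` viewed as the group of linear isometries with determinant one,
and fixes the vector `v` (i.e. `γ` is in the isotropy subgroup `G_v`). -/
def InIsotropy {n : ℕ} (v : E n) (γ : E n ≃ₗᵢ[ℝ] E n) : Prop :=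
  LinearMap.det (γ.toLinearEquiv.toLinearMap) = 1 ∧ γ v = v

open scoped Classical


def ee {n : ℕ} (i : Fin n) : E n := EuclideanSpace.single i (1:ℝ)


lemma det_refl_hyperplane {n : ℕ} (u : E n) (hu : u ≠ 0) :
    LinearMap.det (Submodule.reflection (ℝ ∙ u)ᗮ).toLinearMap = -1 := by
  rw [Submodule.det_reflection, Submodule.orthogonal_orthogonal, finrank_span_singleton hu, pow_one]


lemma exists_iso {n : ℕ} (v a b w : E n) (hab : ‖a‖ = ‖b‖) (hva : ⟪a - b, v⟫ = 0)
    (hw0 : w ≠ 0) (hwv : ⟪w, v⟫ = 0) (hwb : ⟪w, b⟫ = 0) :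
    ∃ γ : E n ≃ₗᵢ[ℝ] E n, InIsotropy v γ ∧ γ a = b := by
  by_cases hab' : a = b
  · refine ⟨LinearIsometryEquiv.refl ℝ (E n), ⟨?_, rfl⟩, hab'⟩
    exact LinearMap.det_id
  · set R1 := Submodule.reflection (ℝ ∙ (a - b))ᗮ with hR1
    set R2 := Submodule.reflection (ℝ ∙ w)ᗮ with hR2
    refine ⟨R1.trans R2, ⟨?_, ?_⟩, ?_⟩
    · have h1 : LinearMap.det R1.toLinearMap = -1 :=
        det_refl_hyperplane _ (sub_ne_zero_of_ne hab')
      have h2 : LinearMap.det R2.toLinearMap = -1 := det_refl_hyperplane _ hw0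
      have : (R1.trans R2).toLinearEquiv.toLinearMap
          = R2.toLinearMap ∘ₗ R1.toLinearMap := rfl
      rw [this, LinearMap.det_comp, h1, h2]; norm_num
    · have hv1 : R1 v = v := Submodule.reflection_mem_subspace_eq_self
        ((Submodule.mem_orthogonal_singleton_iff_inner_right).2 hva)
      have hv2 : R2 v = v := Submodule.reflection_mem_subspace_eq_self
        ((Submodule.mem_orthogonal_singleton_iff_inner_right).2 hwv)
      simp [LinearIsometryEquiv.trans_apply, hv1, hv2]
    · have h1 : R1 a = b := Submodule.reflection_sub hab
      have h2 : R2 b = b := Submodule.reflection_mem_subspace_eq_self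
        ((Submodule.mem_orthogonal_singleton_iff_inner_right).2 hwb)
      simp [LinearIsometryEquiv.trans_apply, h1, h2]


lemma sliceLem {n : ℕ} (i j k : Fin n) (hij : i ≠ j) (hik : i ≠ k) (hjk : j ≠ k)
    (S : E n → ℝ)
    (hS : ∀ γ : E n ≃ₗᵢ[ℝ] E n, InIsotropy (ee i) γ → ∀ x ∈ sphereS n, S (γ x) = S x)
    (x : E n) (hx : x ∈ sphereS n) :
    S ((x i) • ee i + Real.sqrt (1 - (x i)^2) • ee k) = S x := by
  have hxn : ‖x‖ = 1 := by simpa [sphereS] using hx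
  set t := x i
  set s := Real.sqrt (1 - t^2)
  set a := x - t • ee i with ha
  have hsq : ‖a‖^2 = 1 - t^2 := by
    rw [ha, @norm_sub_sq_real]
    have h1 : ⟪x, t • ee i⟫ = t * t := by
      simp [ee, inner_smul_right, EuclideanSpace.inner_single_right]
      exact Or.inl rfl
    have h2 : ‖t • ee i‖ = |t| := by
      simp [ee, norm_smul, EuclideanSpace.norm_single]
    rw [h1, h2, hxn]
    rw [sq_abs]; ring
  have hab : ‖a‖ = ‖s • ee k‖ := by
    have h2 : ‖s • ee k‖ = |s| := by simp [ee, norm_smul, EuclideanSpace.norm_single]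
    rw [h2, abs_of_nonneg (Real.sqrt_nonneg _), ← Real.sqrt_sq (norm_nonneg a), hsq]
  have hva : ⟪a - s • ee k, ee i⟫ = 0 := by
    simp only [ha, inner_sub_left, inner_smul_left, ee,
      EuclideanSpace.inner_single_left, EuclideanSpace.inner_single_right,
      EuclideanSpace.single_apply]
    simp [if_neg (Ne.symm hik)]
    rw [if_neg hik, sub_zero]; exact sub_self t
  have hwv : ⟪ee j, ee i⟫ = 0 := by
    simp [ee, EuclideanSpace.inner_single_left, EuclideanSpace.single_apply]
    exact Ne.symm hij
  have hwb : ⟪ee j, s • ee k⟫ = 0 := by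
    simp [ee, inner_smul_right, EuclideanSpace.inner_single_left,
      EuclideanSpace.single_apply]
    exact fun h => absurd h hjk
  have hw0 : ee j ≠ 0 := by
    intro h
    have := congrArg (fun y : E n => y j) h
    simp [ee, EuclideanSpace.single_apply] at this
  obtain ⟨γ, hγ, hγa⟩ := exists_iso (ee i) a (s • ee k) (ee j) hab hva hw0 hwv hwb
  have hγx : γ x = t • ee i + s • ee k := by
    have hxa : x = t • ee i + a := by rw [ha]; abel
    rw [hxa, map_add, map_smul, hγ.2, hγa]
  rw [← hγx]
  exact hS γ hγ x hx


open MvPolynomial in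
def polyR {n : ℕ} (P : MvPolynomial (Fin n) ℝ) (i0 i2 : Fin n) : MvPolynomial (Fin n) ℝ :=
  ∑ a ∈ P.support,
    if (∀ j, j ≠ i0 → j ≠ i2 → a j = 0) ∧ Even (a i2) then
      C (P.coeff a) * X i0 ^ (a i0) * (1 - X i0 ^ 2) ^ (a i2 / 2)
    else 0

open MvPolynomial in


open MvPolynomial in
lemma polyR_totalDegree {n : ℕ} (P : MvPolynomial (Fin n) ℝ) (i0 i2 : Fin n)
    (h02 : i0 ≠ i2) : (polyR P i0 i2).totalDegree ≤ P.totalDegree := by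
  refine (totalDegree_finset_sum _ _).trans ?_
  apply Finset.sup_le
  intro a ha
  split_ifs with hc
  · have hA : (C (P.coeff a) * X (R := ℝ) i0 ^ (a i0)).totalDegree ≤ a i0 := by
      refine (totalDegree_mul _ _).trans ?_
      rw [totalDegree_C]
      simpa using (totalDegree_pow (X (R := ℝ) i0) (a i0)).trans (by simp [totalDegree_X])
    have hB : ((1 - X (R := ℝ) i0 ^ 2) ^ (a i2 / 2)).totalDegree ≤ a i2 := by
      refine (totalDegree_pow _ _).trans ?_
      have h2 : (1 - X (R := ℝ) i0 ^ 2).totalDegree ≤ 2 := by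
        rw [sub_eq_add_neg]
        refine (totalDegree_add _ _).trans (max_le (by simp [totalDegree_one]) ?_)
        rw [totalDegree_neg]
        simpa using (totalDegree_pow (X (R := ℝ) i0) 2).trans (by simp [totalDegree_X])
      calc (a i2 / 2) * (1 - X (R := ℝ) i0 ^ 2).totalDegree ≤ (a i2 / 2) * 2 :=
            Nat.mul_le_mul_left _ h2
        _ ≤ a i2 := by omega
    have h1 := (totalDegree_mul (C (P.coeff a) * X (R := ℝ) i0 ^ (a i0))
      ((1 - X (R := ℝ) i0 ^ 2) ^ (a i2 / 2))).trans (add_le_add hA hB)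
    refine h1.trans ?_
    have hsum : a i0 + a i2 ≤ a.sum fun _ e => e := by
      rw [Finsupp.sum_fintype _ _ (fun _ => rfl)]
      have h3 := Finset.sum_le_sum_of_subset
        (Finset.subset_univ ({i0, i2} : Finset (Fin n))) (f := fun j => a j)
      rwa [Finset.sum_pair h02] at h3
    exact hsum.trans (le_totalDegree ha)
  · simp


lemma coord_comb {n : ℕ} (i0 i2 : Fin n) (h02 : i0 ≠ i2) (t c : ℝ) (j : Fin n) :
    (t • ee i0 + c • ee i2 : E n) j = if j = i0 then t else if j = i2 then c else 0 := by
  have : (t • ee i0 + c • ee i2 : E n) j = t * (ee i0 : E n) j + c * (ee i2 : E n) j := rfl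
  rw [this]
  simp only [ee, EuclideanSpace.single_apply]
  by_cases h1 : j = i0 <;> by_cases h2 : j = i2 <;>
    simp_all [h02]

open MvPolynomial in


open MvPolynomial in
lemma eval_polyR {n : ℕ} (P : MvPolynomial (Fin n) ℝ) (i0 i2 : Fin n) (z : E n) :
    evalP (polyR P i0 i2) z =
      ∑ a ∈ P.support,
        if (∀ j, j ≠ i0 → j ≠ i2 → a j = 0) ∧ Even (a i2) then
          P.coeff a * (z i0) ^ (a i0) * (1 - (z i0) ^ 2) ^ (a i2 / 2)
        else 0 := by
  unfold evalP polyR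
  rw [map_sum]
  refine Finset.sum_congr rfl fun a _ => ?_
  split_ifs <;> simp

open MvPolynomial in


open MvPolynomial in
lemma eval_avg {n : ℕ} (P : MvPolynomial (Fin n) ℝ) (i0 i2 : Fin n) (h02 : i0 ≠ i2)
    (t s : ℝ) (hs : s ^ 2 = 1 - t ^ 2) :
    evalP P (t • ee i0 + s • ee i2) + evalP P (t • ee i0 + (-s) • ee i2) =
      2 * ∑ a ∈ P.support,
        if (∀ j, j ≠ i0 → j ≠ i2 → a j = 0) ∧ Even (a i2) then
          P.coeff a * t ^ (a i0) * (1 - t ^ 2) ^ (a i2 / 2)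
        else 0 := by
  unfold evalP
  rw [eval_eq', eval_eq', ← Finset.sum_add_distrib, Finset.mul_sum]
  refine Finset.sum_congr rfl fun a ha => ?_
  by_cases hsupp : ∀ j, j ≠ i0 → j ≠ i2 → a j = 0
  · have hprod : ∀ c : ℝ, (∏ j, ((t • ee i0 + c • ee i2 : E n) j) ^ (a j))
        = t ^ (a i0) * c ^ (a i2) := by
      intro c
      rw [show (Finset.univ : Finset (Fin n)) = ({i0, i2} : Finset (Fin n)) ∪
        (Finset.univ \ {i0, i2}) by simp [Finset.union_sdiff_of_subset (Finset.subset_univ _)]]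
      rw [Finset.prod_union (Finset.disjoint_sdiff)]
      have h1 : ∏ j ∈ ({i0, i2} : Finset (Fin n)),
          ((t • ee i0 + c • ee i2 : E n) j) ^ (a j) = t ^ (a i0) * c ^ (a i2) := by
        rw [Finset.prod_pair h02, coord_comb i0 i2 h02, coord_comb i0 i2 h02]
        simp [h02, Ne.symm h02]
      have h2 : ∏ j ∈ Finset.univ \ ({i0, i2} : Finset (Fin n)),
          ((t • ee i0 + c • ee i2 : E n) j) ^ (a j) = 1 := by
        apply Finset.prod_eq_one
        intro j hj
        simp only [Finset.mem_sdiff, Finset.mem_insert, Finset.mem_singleton] at hj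
        rw [hsupp j (fun h => hj.2 (Or.inl h)) (fun h => hj.2 (Or.inr h)), pow_zero]
      rw [h1, h2, mul_one]
    rw [hprod, hprod]
    by_cases hev : Even (a i2)
    · rw [if_pos ⟨hsupp, hev⟩]
      obtain ⟨m, hm⟩ := hev
      have hsk : s ^ (a i2) = (1 - t ^ 2) ^ (a i2 / 2) := by
        rw [show a i2 = 2 * m by omega, pow_mul, hs, show 2 * m / 2 = m by omega]
      have hsk' : (-s) ^ (a i2) = s ^ (a i2) := by
        rw [show a i2 = 2 * m by omega, pow_mul, pow_mul, neg_sq]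
      rw [hsk', hsk]
      ring
    · rw [if_neg (fun h => hev h.2)]
      have : (-s) ^ (a i2) = -(s ^ (a i2)) := Odd.neg_pow (Nat.not_even_iff_odd.1 hev) s
      rw [this]; ring
  · have hz : ∀ c : ℝ, (∏ j, ((t • ee i0 + c • ee i2 : E n) j) ^ (a j)) = 0 := by
      intro c
      push_neg at hsupp
      obtain ⟨j, hj0, hj2, hja⟩ := hsupp
      refine Finset.prod_eq_zero (Finset.mem_univ j) ?_
      rw [coord_comb i0 i2 h02, if_neg hj0, if_neg hj2]
      exact zero_pow hja
    rw [hz, hz, if_neg (fun h => hsupp h.1)]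
    ring


lemma ee_ne_zero {n : ℕ} (i : Fin n) : (ee i : E n) ≠ 0 := by
  intro h
  have := congrArg (fun y : E n => y i) h
  simp [ee, EuclideanSpace.single_apply] at this

lemma one_sub_sq_nonneg {n : ℕ} (i : Fin n) (x : E n) (hx : x ∈ sphereS n) :
    0 ≤ 1 - (x i)^2 := by
  have hxn : ‖x‖ = 1 := by simpa [sphereS] using hx
  have h1 : x i = ⟪ee i, x⟫ := by
    simp [ee, EuclideanSpace.inner_single_left]
  have h2 : |⟪ee i, x⟫| ≤ ‖(ee i : E n)‖ * ‖x‖ := abs_real_inner_le_norm _ _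
  have h3 : ‖(ee i : E n)‖ = 1 := by simp [ee, EuclideanSpace.norm_single]
  rw [h3, hxn, one_mul] at h2
  have h4 : (x i)^2 ≤ 1 := by
    rw [h1, ← sq_abs]
    nlinarith [abs_nonneg ⟪(ee i : E n), x⟫]
  linarith

lemma comb_mem_sphere {n : ℕ} (i0 i2 : Fin n) (h02 : i0 ≠ i2) (t c : ℝ)
    (h : t^2 + c^2 = 1) : (t • ee i0 + c • ee i2 : E n) ∈ sphereS n := by
  have hi : ⟪(t • ee i0 : E n), c • ee i2⟫ = 0 := by
    simp [ee, inner_smul_left, inner_smul_right, EuclideanSpace.inner_single_left,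
      EuclideanSpace.single_apply]
    exact fun hh => absurd hh h02
  have hsq : ‖(t • ee i0 + c • ee i2 : E n)‖^2 = 1 := by
    rw [@norm_add_sq_real, hi]
    have h1 : ‖(t • ee i0 : E n)‖ = |t| := by
      simp [ee, norm_smul, EuclideanSpace.norm_single]
    have h2 : ‖(c • ee i2 : E n)‖ = |c| := by
      simp [ee, norm_smul, EuclideanSpace.norm_single]
    rw [h1, h2, sq_abs, sq_abs]
    linarith
  have hnn := norm_nonneg (t • ee i0 + c • ee i2 : E n)
  have : ‖(t • ee i0 + c • ee i2 : E n)‖ = 1 := by nlinarith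
  simpa [sphereS] using this

/-- Writing `d = m - 1`: if a smooth function `W` on `S^{n-1}` (n ≥ 3) is invariant under
the isotropy subgroup `G_v` of every `v ≠ 0` up to spherical harmonics of degree `≤ d`,
and for every `v` one can write `W = q_v + S_v` on the sphere with `q_v` of degree `≤ d`
and `S_v` invariant under `G_v`, then `W` is a sum of spherical harmonics of degree `≤ d`. -/
theorem xray_stmt4 {n d : ℕ} (hn : 3 ≤ n) (W : E n → ℝ) (hW : ContDiff ℝ (⊤ : ℕ∞) W)
    (h1 : ∀ v : E n, v ≠ 0 → ∀ γ : E n ≃ₗᵢ[ℝ] E n, InIsotropy v γ →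
      IsDegLE d (sphereS n) (fun x => W (γ x) - W x))
    (h2 : ∀ v : E n, v ≠ 0 → ∃ q S : E n → ℝ,
      IsDegLE d (sphereS n) q ∧
      (∀ γ : E n ≃ₗᵢ[ℝ] E n, InIsotropy v γ → ∀ x ∈ sphereS n, S (γ x) = S x) ∧
      (∀ x ∈ sphereS n, W x = q x + S x)) :
    IsDegLE d (sphereS n) W := by
  classical
  set i0 : Fin n := ⟨0, by omega⟩ with hi0
  set i1 : Fin n := ⟨1, by omega⟩ with hi1
  set i2 : Fin n := ⟨2, by omega⟩ with hi2
  have h01 : i0 ≠ i1 := by simp [hi0, hi1, Fin.ext_iff]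
  have h02 : i0 ≠ i2 := by simp [hi0, hi2, Fin.ext_iff]
  have h12 : i1 ≠ i2 := by simp [hi1, hi2, Fin.ext_iff]
  obtain ⟨q, S, ⟨Q, hQd, hQ⟩, hSinv, hWqS⟩ := h2 (ee i0) (ee_ne_zero i0)
  obtain ⟨q', S', ⟨Q', hQ'd, hQ'⟩, hS'inv, hWqS'⟩ := h2 (ee i1) (ee_ne_zero i1)
  set P : MvPolynomial (Fin n) ℝ := Q' - Q with hP
  have hPd : P.totalDegree ≤ d := by
    rw [hP, sub_eq_add_neg]
    refine (MvPolynomial.totalDegree_add _ _).trans (max_le hQ'd ?_)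
    rwa [MvPolynomial.totalDegree_neg]
  set g0 : ℝ := S' ((0:ℝ) • ee i1 + Real.sqrt (1 - (0:ℝ)^2) • ee i2) with hg0
  have keyPS : ∀ y ∈ sphereS n, S y = evalP P y + S' y := by
    intro y hy
    have e1 := hWqS y hy
    have e2 := hWqS' y hy
    rw [hQ y hy] at e1
    rw [hQ' y hy] at e2
    have : evalP P y = evalP Q' y - evalP Q y := by
      simp [evalP, hP, map_sub]
    rw [this]
    linarith
  refine ⟨Q + polyR P i0 i2 + MvPolynomial.C g0, ?_, ?_⟩
  · refine (MvPolynomial.totalDegree_add _ _).trans (max_le ?_ ?_)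
    · exact (MvPolynomial.totalDegree_add _ _).trans
        (max_le hQd ((polyR_totalDegree P i0 i2 h02).trans hPd))
    · simp [MvPolynomial.totalDegree_C]
  · intro x hx
    have h1t : 0 ≤ 1 - (x i0)^2 := one_sub_sq_nonneg i0 x hx
    set t : ℝ := x i0 with ht
    set s : ℝ := Real.sqrt (1 - t^2) with hs
    have hs2 : s^2 = 1 - t^2 := Real.sq_sqrt h1t
    set xp : E n := t • ee i0 + s • ee i2 with hxp
    set xm : E n := t • ee i0 + (-s) • ee i2 with hxm
    have hxpS : xp ∈ sphereS n := comb_mem_sphere i0 i2 h02 t s (by linarith)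
    have hxmS : xm ∈ sphereS n := comb_mem_sphere i0 i2 h02 t (-s) (by
      have : (-s)^2 = s^2 := by ring
      rw [this]; linarith)
    have hxpc0 : xp i0 = t := by rw [hxp, coord_comb i0 i2 h02]; simp
    have hxmc0 : xm i0 = t := by rw [hxm, coord_comb i0 i2 h02]; simp
    have hxpc1 : xp i1 = 0 := by
      rw [hxp, coord_comb i0 i2 h02, if_neg (Ne.symm h01), if_neg h12]
    have hxmc1 : xm i1 = 0 := by
      rw [hxm, coord_comb i0 i2 h02, if_neg (Ne.symm h01), if_neg h12]
    have hSxp : S xp = S x := by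
      have := sliceLem i0 i1 i2 h01 h02 h12 S hSinv x hx
      rwa [← ht, ← hs, ← hxp] at this
    have hSxm : S xm = S x := by
      have := sliceLem i0 i1 i2 h01 h02 h12 S hSinv xm hxmS
      rw [hxmc0, ← hs, ← hxp] at this
      rw [← this, hSxp]
    have hS'xp : S' xp = g0 := by
      have := sliceLem i1 i0 i2 h01.symm h12 h02 S' hS'inv xp hxpS
      rw [hxpc1] at this
      rw [← this, hg0]
    have hS'xm : S' xm = g0 := by
      have := sliceLem i1 i0 i2 h01.symm h12 h02 S' hS'inv xm hxmS
      rw [hxmc1] at this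
      rw [← this, hg0]
    have hkp : S xp = evalP P xp + g0 := by rw [keyPS xp hxpS, hS'xp]
    have hkm : S xm = evalP P xm + g0 := by rw [keyPS xm hxmS, hS'xm]
    have havg := eval_avg P i0 i2 h02 t s hs2
    have hpol := eval_polyR P i0 i2 x
    rw [← ht] at hpol
    have hPsum : evalP P xp + evalP P xm = 2 * evalP (polyR P i0 i2) x := by
      rw [hxp, hxm, havg, hpol]
    have hSx : S x = evalP (polyR P i0 i2) x + g0 := by
      have h2Sx : S xp + S xm = 2 * S x := by rw [hSxp, hSxm]; ring
      rw [hkp, hkm] at h2Sx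
      linarith
    have hWx := hWqS x hx
    rw [hQ x hx, hSx] at hWx
    rw [hWx]
    simp [evalP, map_add]
    ring
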